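/- arXiv:1902.07270 — 4 statements merged into one kernel-verified Lean document; each statement's English description precedes it below -/
import Mathlib

section
/- Let A < B and let i = m + k + 1 with m = 2^j be a wavelet index (i ≥ 2). Then p_{2,i}(x) = ∫_A^x (x−t) h_i(t) dt is monotone nondecreasing on [A,B] and satisfies 0 ≤ p_{2,i}(x) ≤ (B−A)²/(4m²) for all x ∈ [A,B]. -/
open MeasureTheory

/-- The Haar wavelet on `[A,B]` at dyadic level `j` with shift `k`
(corresponding to wavelet index `i = 2^j + k + 1 ≥ 2`, `m = 2^j`). -/
noncomputable def haarFn (A B : ℝ) (j k : ℕ) (x : ℝ) : ℝ :=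
  if A + k * (B - A) / 2 ^ j ≤ x ∧ x < A + (k + 1 / 2) * (B - A) / 2 ^ j then 1
  else if A + (k + 1 / 2) * (B - A) / 2 ^ j ≤ x ∧ x < A + (k + 1) * (B - A) / 2 ^ j then -1
  else 0

/-- Closed form for the second repeated integral of the Haar wavelet. -/
noncomputable def haarP2 (A B : ℝ) (j k : ℕ) (x : ℝ) : ℝ :=
  if x ≤ A + (k + 1 / 2) * (B - A) / 2 ^ j then
    (max x (A + k * (B - A) / 2 ^ j) - (A + k * (B - A) / 2 ^ j)) ^ 2 / 2
  else
    ((B - A) / (2 * 2 ^ j)) ^ 2 / 2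
      + (B - A) / (2 * 2 ^ j) *
          (min x (A + (k + 1) * (B - A) / 2 ^ j) - (A + (k + 1 / 2) * (B - A) / 2 ^ j))
      - (min x (A + (k + 1) * (B - A) / 2 ^ j) - (A + (k + 1 / 2) * (B - A) / 2 ^ j)) ^ 2 / 2

lemma haar_decomp (A B : ℝ) (j k : ℕ) (x t : ℝ) :
    (x - t) * haarFn A B j k t =
      (Set.Ico (A + k * (B - A) / 2 ^ j) (A + (k + 1 / 2) * (B - A) / 2 ^ j)).indicator
        (fun t => x - t) t -
      (Set.Ico (A + (k + 1 / 2) * (B - A) / 2 ^ j) (A + (k + 1) * (B - A) / 2 ^ j)).indicator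
        (fun t => x - t) t := by
  simp only [haarFn, Set.indicator_apply, Set.mem_Ico]
  split_ifs with h1 h2 h3
  · exact absurd h2.1 (not_le.2 h1.2)
  · ring
  · ring
  · ring

lemma indicIntegrable (a b x u v : ℝ) :
    IntervalIntegrable ((Set.Ico a b).indicator (fun t => x - t)) volume u v := by
  have h : Integrable ((Set.Ico a b).indicator (fun t => x - t)) volume := by
    rw [integrable_indicator_iff measurableSet_Ico]
    exact ((continuous_const.sub continuous_id).integrableOn_Icc).mono_set
      Set.Ico_subset_Icc_self
  exact h.intervalIntegrable

lemma indicInt (A a b x : ℝ) (hAa : A ≤ a) (hAx : A ≤ x) :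
    (∫ t in A..x, (Set.Ico a b).indicator (fun t => x - t) t) =
      x * (max a (min b x) - a) - ((max a (min b x)) ^ 2 - a ^ 2) / 2 := by
  have hset : (Set.Ico a b ∩ Set.Ioc A x : Set ℝ) =ᵐ[volume]
      (Set.Ioc a (max a (min b x)) : Set ℝ) := by
    have h1 : (Set.Ico a b ∩ Set.Ioc A x : Set ℝ) =ᵐ[volume]
        (Set.Ioc a b ∩ Set.Ioc A x : Set ℝ) :=
      Filter.EventuallyEq.inter Ico_ae_eq_Ioc (Filter.EventuallyEq.refl _ _)
    have h2 : (Set.Ioc a b ∩ Set.Ioc A x : Set ℝ) = Set.Ioc a (max a (min b x)) := by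
      rw [Set.Ioc_inter_Ioc, max_eq_left hAa]
      rcases le_total a (min b x) with h | h
      · rw [max_eq_right h]
      · rw [max_eq_left h, Set.Ioc_eq_empty (not_lt.2 h), Set.Ioc_eq_empty (lt_irrefl a)]
    rw [← h2]; exact h1
  rw [intervalIntegral.integral_of_le hAx,
      MeasureTheory.integral_indicator measurableSet_Ico,
      Measure.restrict_restrict measurableSet_Ico,
      setIntegral_congr_set hset,
      ← intervalIntegral.integral_of_le (le_max_left a _)]
  rw [intervalIntegral.integral_sub intervalIntegrable_const
      intervalIntegral.intervalIntegrable_id, intervalIntegral.integral_const,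
      integral_id, smul_eq_mul]
  ring

lemma haarP2_eq (A B : ℝ) (hAB : A < B) (j k : ℕ) (hk : k < 2 ^ j) (x : ℝ)
    (hx : x ∈ Set.Icc A B) :
    (∫ t in A..x, (x - t) * haarFn A B j k t) = haarP2 A B j k x := by
  obtain ⟨hxA, hxB⟩ := hx
  have hm : (0 : ℝ) < 2 ^ j := by positivity
  set c1 := A + k * (B - A) / 2 ^ j with hc1
  set c2 := A + (k + 1 / 2) * (B - A) / 2 ^ j with hc2
  set c3 := A + (k + 1) * (B - A) / 2 ^ j with hc3
  have hA1 : A ≤ c1 := by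
    rw [hc1]
    have : 0 ≤ (k : ℝ) * (B - A) / 2 ^ j :=
      div_nonneg (mul_nonneg (Nat.cast_nonneg k) (by linarith)) hm.le
    linarith
  have h12 : c1 < c2 := by rw [hc1, hc2]; gcongr <;> linarith
  have h23 : c2 < c3 := by rw [hc2, hc3]; gcongr <;> linarith
  have hA2 : A ≤ c2 := le_of_lt (lt_of_le_of_lt hA1 h12)
  rw [intervalIntegral.integral_congr (g :=
        fun t => (Set.Ico c1 c2).indicator (fun t => x - t) t
          - (Set.Ico c2 c3).indicator (fun t => x - t) t)
      (fun t _ => haar_decomp A B j k x t),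
      intervalIntegral.integral_sub (indicIntegrable _ _ _ _ _) (indicIntegrable _ _ _ _ _),
      indicInt A c1 c2 x hA1 hxA, indicInt A c2 c3 x hA2 hxA]
  rw [haarP2]
  rcases le_or_gt x c2 with h2 | h2
  · rw [if_pos h2]
    have e2 : max c2 (min c3 x) = c2 := max_eq_left (le_trans (min_le_right _ _) h2)
    have e1m : min c2 x = x := min_eq_right h2
    rcases le_total x c1 with h1 | h1
    · rw [e2, e1m, max_eq_left h1, max_eq_right h1]; ring
    · rw [e2, e1m, max_eq_right h1, max_eq_left h1]; ring
  · rw [if_neg (not_le.2 h2)]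
    have e1 : max c1 (min c2 x) = c2 := by rw [min_eq_left h2.le, max_eq_right h12.le]
    rcases le_total x c3 with h3 | h3
    · rw [e1, min_eq_right h3, min_eq_left h3, max_eq_right h2.le]
      simp only [hc1, hc2, hc3]
      field_simp
      ring
    · rw [e1, min_eq_left h3, min_eq_right h3, max_eq_right h23.le]
      simp only [hc1, hc2, hc3]
      field_simp
      ring

/-- For a Haar wavelet with `i = m + k + 1`, `m = 2^j`, the second repeated integral
`p_{2,i}(x) = ∫_A^x (x-t) h_i(t) dt` is monotone nondecreasing on `[A,B]` and
satisfies `0 ≤ p_{2,i}(x) ≤ (B-A)²/(4m²)` there. -/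
theorem haar_second_integral_bounds (A B : ℝ) (hAB : A < B) (j k : ℕ) (hk : k < 2 ^ j) :
    MonotoneOn (fun x : ℝ => ∫ t in A..x, (x - t) * haarFn A B j k t) (Set.Icc A B) ∧
    ∀ x ∈ Set.Icc A B,
      0 ≤ (∫ t in A..x, (x - t) * haarFn A B j k t) ∧
      (∫ t in A..x, (x - t) * haarFn A B j k t) ≤
        (B - A) ^ 2 / (4 * ((2 : ℝ) ^ j) ^ 2) := by
  have hm : (0 : ℝ) < 2 ^ j := by positivity
  set c1 := A + k * (B - A) / 2 ^ j with hc1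
  set c2 := A + (k + 1 / 2) * (B - A) / 2 ^ j with hc2
  set c3 := A + (k + 1) * (B - A) / 2 ^ j with hc3
  set d := (B - A) / (2 * 2 ^ j) with hd
  have hd0 : 0 < d := by
    rw [hd]; exact div_pos (by linarith) (by positivity)
  have hd1 : c2 - c1 = d := by simp only [hc1, hc2, hd]; field_simp; ring
  have hd2 : c3 - c2 = d := by simp only [hc2, hc3, hd]; field_simp; ring
  have h12 : c1 < c2 := by linarith
  have h23 : c2 < c3 := by linarith
  have hbd : (B - A) ^ 2 / (4 * ((2 : ℝ) ^ j) ^ 2) = d ^ 2 := by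
    rw [hd]; field_simp; ring_nf
  -- bounds and monotonicity for the closed form
  have hFval : ∀ x : ℝ, haarP2 A B j k x =
      if x ≤ c2 then (max x c1 - c1) ^ 2 / 2
      else d ^ 2 / 2 + d * (min x c3 - c2) - (min x c3 - c2) ^ 2 / 2 := by
    intro x; rw [haarP2]
  clear_value c1 c2 c3 d
  clear hc1 hc2 hc3 hd
  have hmono : MonotoneOn (haarP2 A B j k) (Set.Icc A B) := by
    intro x _ y _ hxy
    rw [hFval x, hFval y]
    rcases le_or_gt x c2 with h2x | h2x <;> rcases le_or_gt y c2 with h2y | h2y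
    · rw [if_pos h2x, if_pos h2y]
      have h1 : c1 ≤ max x c1 := le_max_right _ _
      have h2 : max x c1 ≤ max y c1 := max_le_max hxy le_rfl
      nlinarith [mul_nonneg (sub_nonneg.2 h2)
        (by linarith : (0:ℝ) ≤ max x c1 + max y c1 - 2 * c1)]
    · rw [if_pos h2x, if_neg (not_le.2 h2y)]
      have h1 : c1 ≤ max x c1 := le_max_right _ _
      have h2 : max x c1 ≤ c2 := max_le h2x h12.le
      have h3 : c2 ≤ min y c3 := le_min h2y.le h23.le
      have h4 : min y c3 ≤ c3 := min_le_right _ _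
      nlinarith
    · linarith
    · rw [if_neg (not_le.2 h2x), if_neg (not_le.2 h2y)]
      have h3x : c2 ≤ min x c3 := le_min h2x.le h23.le
      have h4x : min x c3 ≤ c3 := min_le_right _ _
      have h3y : c2 ≤ min y c3 := le_min h2y.le h23.le
      have h4y : min y c3 ≤ c3 := min_le_right _ _
      have h5 : min x c3 ≤ min y c3 := min_le_min hxy le_rfl
      nlinarith
  have hbounds : ∀ x : ℝ, 0 ≤ haarP2 A B j k x ∧ haarP2 A B j k x ≤ d ^ 2 := by
    intro x
    rw [hFval x]
    rcases le_or_gt x c2 with h2 | h2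
    · rw [if_pos h2]
      have h1 : c1 ≤ max x c1 := le_max_right _ _
      have h2' : max x c1 ≤ c2 := max_le h2 h12.le
      constructor
      · positivity
      · nlinarith
    · rw [if_neg (not_le.2 h2)]
      have h3 : c2 ≤ min x c3 := le_min h2.le h23.le
      have h4 : min x c3 ≤ c3 := min_le_right _ _
      constructor <;> nlinarith
  constructor
  · intro x hx y hy hxy
    simp only
    rw [haarP2_eq A B hAB j k hk x hx, haarP2_eq A B hAB j k hk y hy]
    exact hmono hx hy hxy
  · intro x hx
    rw [haarP2_eq A B hAB j k hk x hx, hbd]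
    exact hbounds x
end

section
/- Let v : [0,1]² → ℝ be Lipschitz continuous with constant C in the ℓ¹ sense, i.e. |v(x,y) − v(x′,y′)| ≤ C(|x − x′| + |y − y′|) for all points of [0,1]². Let i_1 = 2^j + k_1 + 1 and i_2 = 2^j + k_2 + 1 be two wavelet indices at the same resolution level j, and set m = 2^j. Then the two-dimensional Haar wavelet coefficient a_{i_1,i_2} = ∫_0^1 ∫_0^1 v(x,y) h_{i_1}(x) h_{i_2}(y) dx dy satisfies |a_{i_1,i_2}| ≤ C/(4m³). -/
open MeasureTheory

lemma ae_ne_real (w : ℝ) : ∀ᵐ x : ℝ, x ≠ w := by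
  refine MeasureTheory.ae_iff.mpr ?_
  simpa using (MeasureTheory.measure_singleton w (μ := (volume : Measure ℝ)))

/-- Key reduction: integrating against a Haar wavelet at level `j`, shift `k`,
equals the integral of a shifted difference over the left half-support. -/
lemma haar_integral_eq (j k : ℕ) (hk : k < 2 ^ j) (f : ℝ → ℝ)
    (hf : ∀ u ∈ Set.Icc (0:ℝ) 1, ∀ w ∈ Set.Icc (0:ℝ) 1, IntervalIntegrable f volume u w) :
    ∫ x in (0:ℝ)..1, f x * haarFn 0 1 j k x
      = ∫ x in ((k:ℝ)/2^j)..((k:ℝ)/2^j + 1/(2*2^j)), (f x - f (x + 1/(2*2^j))) := by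
  set m : ℝ := 2 ^ j with hm
  have hm0 : (0:ℝ) < m := by positivity
  set a : ℝ := (k:ℝ) / m with ha
  set ε : ℝ := 1 / (2 * m) with he
  have he0 : 0 < ε := by positivity
  have ha0 : 0 ≤ a := by positivity
  have hklt : (k:ℝ) + 1 ≤ m := by
    rw [hm]; exact_mod_cast hk
  have hub : a + 2 * ε ≤ 1 := by
    have e : a + 2 * ε = ((k:ℝ) + 1) / m := by rw [ha, he]; field_simp
    rw [e, div_le_one hm0]; linarith
  -- rewrite the breakpoints of haarFn
  have e1 : (0:ℝ) + (k:ℝ) * (1 - 0) / 2 ^ j = a := by rw [ha, hm]; ring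
  have e2 : (0:ℝ) + ((k:ℝ) + 1 / 2) * (1 - 0) / 2 ^ j = a + ε := by
    rw [ha, he, hm]; field_simp; ring
  have e3 : (0:ℝ) + ((k:ℝ) + 1) * (1 - 0) / 2 ^ j = a + 2 * ε := by
    rw [ha, he, hm]; field_simp; ring
  have haar1 : ∀ x ∈ Set.Ioo a (a + ε), haarFn 0 1 j k x = 1 := by
    intro x hx
    unfold haarFn
    rw [e1, e2, if_pos ⟨hx.1.le, hx.2⟩]
  have haar2 : ∀ x ∈ Set.Ioo (a + ε) (a + 2 * ε), haarFn 0 1 j k x = -1 := by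
    intro x hx
    unfold haarFn
    rw [e1, e2, e3, if_neg (by push_neg; intro _; exact hx.1.le),
      if_pos ⟨hx.1.le, hx.2⟩]
  have haar0l : ∀ x ∈ Set.Ioo (0:ℝ) a, haarFn 0 1 j k x = 0 := by
    intro x hx
    unfold haarFn
    rw [e1, e2, e3, if_neg (by push_neg; intro hc; exact absurd hc (not_le.mpr hx.2)),
      if_neg (by push_neg; intro hc; linarith [hx.2])]
  have haar0r : ∀ x ∈ Set.Ioo (a + 2 * ε) (1:ℝ), haarFn 0 1 j k x = 0 := by
    intro x hx
    unfold haarFn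
    rw [e1, e2, e3, if_neg (by push_neg; intro _; linarith [hx.1]),
      if_neg (by push_neg; intro _; linarith [hx.1])]
  -- generic piece treatment
  have piece : ∀ u w c : ℝ, u ≤ w → (∀ x ∈ Set.Ioo u w, haarFn 0 1 j k x = c) →
      ∀ᵐ x : ℝ, x ∈ Set.uIoc u w → f x * haarFn 0 1 j k x = f x * c := by
    intro u w c huw hc
    filter_upwards [ae_ne_real w] with x hxw hx
    rw [Set.uIoc_of_le huw, Set.mem_Ioc] at hx
    rw [hc x ⟨hx.1, lt_of_le_of_ne hx.2 hxw⟩]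
  have piece_int : ∀ u w c : ℝ, u ∈ Set.Icc (0:ℝ) 1 → w ∈ Set.Icc (0:ℝ) 1 → u ≤ w →
      (∀ x ∈ Set.Ioo u w, haarFn 0 1 j k x = c) →
      IntervalIntegrable (fun x => f x * haarFn 0 1 j k x) volume u w := by
    intro u w c hu hw huw hc
    refine ((hf u hu w hw).mul_const c).congr_ae ?_
    have h1 := piece u w c huw hc
    filter_upwards [ae_restrict_of_ae h1, ae_restrict_mem measurableSet_uIoc] with x h hmem
    exact (h hmem).symm
  have piece_eq : ∀ u w c : ℝ, u ≤ w → (∀ x ∈ Set.Ioo u w, haarFn 0 1 j k x = c) →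
      ∫ x in u..w, f x * haarFn 0 1 j k x = c * ∫ x in u..w, f x := by
    intro u w c huw hc
    rw [intervalIntegral.integral_congr_ae (piece u w c huw hc)]
    rw [intervalIntegral.integral_mul_const, mul_comm]
  -- membership facts
  have hmem0 : (0:ℝ) ∈ Set.Icc (0:ℝ) 1 := by constructor <;> norm_num
  have hmem1 : (1:ℝ) ∈ Set.Icc (0:ℝ) 1 := by constructor <;> norm_num
  have hmema : a ∈ Set.Icc (0:ℝ) 1 := ⟨ha0, by linarith⟩
  have hmemae : a + ε ∈ Set.Icc (0:ℝ) 1 := ⟨by linarith, by linarith⟩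
  have hmema2e : a + 2 * ε ∈ Set.Icc (0:ℝ) 1 := ⟨by linarith, hub⟩
  have i1 := piece_int 0 a 0 hmem0 hmema ha0 haar0l
  have i2 := piece_int a (a + ε) 1 hmema hmemae (by linarith) haar1
  have i3 := piece_int (a + ε) (a + 2 * ε) (-1) hmemae hmema2e (by linarith) haar2
  have i4 := piece_int (a + 2 * ε) 1 0 hmema2e hmem1 hub haar0r
  -- split the integral
  have hsplit : ∫ x in (0:ℝ)..1, f x * haarFn 0 1 j k x
      = (∫ x in (0:ℝ)..a, f x * haarFn 0 1 j k x)
        + ((∫ x in a..(a+ε), f x * haarFn 0 1 j k x)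
        + ((∫ x in (a+ε)..(a+2*ε), f x * haarFn 0 1 j k x)
        + (∫ x in (a+2*ε)..1, f x * haarFn 0 1 j k x))) := by
    rw [intervalIntegral.integral_add_adjacent_intervals i3 i4,
      intervalIntegral.integral_add_adjacent_intervals i2 (i3.trans i4),
      intervalIntegral.integral_add_adjacent_intervals i1 ((i2.trans i3).trans i4)]
  rw [hsplit, piece_eq 0 a 0 ha0 haar0l, piece_eq a (a+ε) 1 (by linarith) haar1,
    piece_eq (a+ε) (a+2*ε) (-1) (by linarith) haar2,
    piece_eq (a+2*ε) 1 0 hub haar0r]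
  have hshift : ∫ x in a..(a+ε), f (x + ε) = ∫ x in (a+ε)..(a+2*ε), f x := by
    rw [intervalIntegral.integral_comp_add_right (f := f) ε]
    norm_num
    ring_nf
  have hint1 : IntervalIntegrable f volume a (a + ε) := hf a hmema (a+ε) hmemae
  have hint2 : IntervalIntegrable (fun x => f (x + ε)) volume a (a + ε) := by
    have := (hf (a+ε) hmemae (a+2*ε) hmema2e).comp_add_right ε
    have e4 : a + ε - ε = a := by ring
    have e5 : a + 2*ε - ε = a + ε := by ring
    rwa [e4, e5] at this
  rw [intervalIntegral.integral_sub hint1 hint2, ← hshift]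
  ring

/-- If `v` is Lipschitz on `[0,1]²` with constant `C` in the `ℓ¹` sense, then the
two-dimensional Haar coefficient at same resolution level `j` (indices
`i₁ = 2^j + k₁ + 1`, `i₂ = 2^j + k₂ + 1`, `m = 2^j`) satisfies
`|a_{i₁,i₂}| ≤ C/(4m³)`. -/
theorem haar_coeff2d_lipschitz_bound (C : ℝ) (v : ℝ → ℝ → ℝ)
    (hv : ∀ x ∈ Set.Icc (0 : ℝ) 1, ∀ y ∈ Set.Icc (0 : ℝ) 1,
      ∀ x' ∈ Set.Icc (0 : ℝ) 1, ∀ y' ∈ Set.Icc (0 : ℝ) 1,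
      |v x y - v x' y'| ≤ C * (|x - x'| + |y - y'|))
    (j k1 k2 : ℕ) (hk1 : k1 < 2 ^ j) (hk2 : k2 < 2 ^ j) :
    |∫ x in (0 : ℝ)..1, ∫ y in (0 : ℝ)..1,
        v x y * haarFn 0 1 j k1 x * haarFn 0 1 j k2 y| ≤
      C / (4 * ((2 : ℝ) ^ j) ^ 3) := by
  set m : ℝ := 2 ^ j with hm
  have hm0 : (0:ℝ) < m := by positivity
  set ε : ℝ := 1 / (2 * m) with he
  have he0 : 0 < ε := by positivity
  set a : ℝ := (k1:ℝ) / m with ha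
  set b : ℝ := (k2:ℝ) / m with hb
  have hk1' : (k1:ℝ) + 1 ≤ m := by rw [hm]; exact_mod_cast hk1
  have hk2' : (k2:ℝ) + 1 ≤ m := by rw [hm]; exact_mod_cast hk2
  have ha0 : 0 ≤ a := by positivity
  have hb0 : 0 ≤ b := by positivity
  have hau : a + 2 * ε ≤ 1 := by
    have e : a + 2 * ε = ((k1:ℝ) + 1) / m := by rw [ha, he]; field_simp
    rw [e, div_le_one hm0]; linarith
  have hbu : b + 2 * ε ≤ 1 := by
    have e : b + 2 * ε = ((k2:ℝ) + 1) / m := by rw [hb, he]; field_simp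
    rw [e, div_le_one hm0]; linarith
  have hC : 0 ≤ C := by
    have h1 := hv 0 (by norm_num) 0 (by norm_num) 1 (by norm_num) 0 (by norm_num)
    have h2 : (0:ℝ) ≤ |v 0 0 - v 1 0| := abs_nonneg _
    have h3 : |(0:ℝ) - 1| = 1 := by norm_num
    rw [h3] at h1
    simp at h1
    linarith
  -- continuity of slices
  have cont : ∀ x ∈ Set.Icc (0:ℝ) 1, ContinuousOn (fun y => v x y) (Set.Icc 0 1) := by
    intro x hx
    have : LipschitzOnWith (Real.toNNReal C) (fun y => v x y) (Set.Icc 0 1) := by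
      rw [lipschitzOnWith_iff_dist_le_mul]
      intro y hy y' hy'
      have h1 := hv x hx y hy x hx y' hy'
      simp only [sub_self, abs_zero, zero_add] at h1
      simp only [Real.dist_eq]
      calc |v x y - v x y'| ≤ C * |y - y'| := h1
        _ = (Real.toNNReal C : ℝ) * |y - y'| := by rw [Real.coe_toNNReal C hC]
    exact this.continuousOn
  have vint : ∀ x ∈ Set.Icc (0:ℝ) 1, ∀ u ∈ Set.Icc (0:ℝ) 1, ∀ w ∈ Set.Icc (0:ℝ) 1,
      IntervalIntegrable (fun y => v x y) volume u w := by
    intro x hx u hu w hw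
    exact ((cont x hx).mono (Set.uIcc_subset_Icc hu hw)).intervalIntegrable
  -- the inner coefficient function
  set F : ℝ → ℝ := fun x => ∫ y in b..(b+ε), (v x y - v x (y+ε)) with hF
  have hmemb : b ∈ Set.Icc (0:ℝ) 1 := ⟨hb0, by linarith⟩
  have hmembe : b + ε ∈ Set.Icc (0:ℝ) 1 := ⟨by linarith, by linarith⟩
  have hsubb : Set.Icc b (b+ε) ⊆ Set.Icc (0:ℝ) 1 := Set.Icc_subset_Icc hb0 (by linarith)
  have hmaps : Set.MapsTo (fun y => y + ε) (Set.Icc b (b+ε)) (Set.Icc (0:ℝ) 1) := by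
    intro y hy
    exact ⟨by have := hy.1; simp; linarith, by have := hy.2; simp; linarith⟩
  have igr : ∀ x ∈ Set.Icc (0:ℝ) 1,
      IntervalIntegrable (fun y => v x y - v x (y+ε)) volume b (b+ε) := by
    intro x hx
    have c1 : ContinuousOn (fun y => v x y) (Set.Icc b (b+ε)) := (cont x hx).mono hsubb
    have c2 : ContinuousOn (fun y => v x (y+ε)) (Set.Icc b (b+ε)) :=
      (cont x hx).comp (Continuous.continuousOn (by continuity)) hmaps
    exact ContinuousOn.intervalIntegrable_of_Icc (μ := volume) (by linarith) (c1.sub c2)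
  -- the Lipschitz-type bound on F
  have Fdiff : ∀ x ∈ Set.Icc (0:ℝ) 1, ∀ x' ∈ Set.Icc (0:ℝ) 1,
      |F x - F x'| ≤ 2 * C * |x - x'| * ε := by
    intro x hx x' hx'
    have hsub : F x - F x'
        = ∫ y in b..(b+ε), ((v x y - v x (y+ε)) - (v x' y - v x' (y+ε))) :=
      (intervalIntegral.integral_sub (igr x hx) (igr x' hx')).symm
    rw [hsub]
    have hbnd : ∀ y ∈ Set.uIoc b (b+ε),
        ‖(v x y - v x (y+ε)) - (v x' y - v x' (y+ε))‖ ≤ 2 * C * |x - x'| := by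
      intro y hy
      rw [Set.uIoc_of_le (by linarith : b ≤ b + ε)] at hy
      have hyI : y ∈ Set.Icc (0:ℝ) 1 := hsubb ⟨hy.1.le, hy.2⟩
      have hyeI : y + ε ∈ Set.Icc (0:ℝ) 1 := hmaps ⟨hy.1.le, hy.2⟩
      have h1 := hv x hx y hyI x' hx' y hyI
      have h2 := hv x hx (y+ε) hyeI x' hx' (y+ε) hyeI
      simp only [sub_self, abs_zero, add_zero] at h1 h2
      have e : (v x y - v x (y+ε)) - (v x' y - v x' (y+ε))
          = (v x y - v x' y) - (v x (y+ε) - v x' (y+ε)) := by ring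
      rw [Real.norm_eq_abs, e]
      calc |(v x y - v x' y) - (v x (y+ε) - v x' (y+ε))|
          ≤ |v x y - v x' y| + |v x (y+ε) - v x' (y+ε)| := abs_sub _ _
        _ ≤ C * |x - x'| + C * |x - x'| := add_le_add h1 h2
        _ = 2 * C * |x - x'| := by ring
    have := intervalIntegral.norm_integral_le_of_norm_le_const hbnd
    rw [Real.norm_eq_abs] at this
    calc |∫ y in b..(b+ε), ((v x y - v x (y+ε)) - (v x' y - v x' (y+ε)))|
        ≤ 2 * C * |x - x'| * |b + ε - b| := this
      _ = 2 * C * |x - x'| * ε := by rw [show b + ε - b = ε by ring, abs_of_pos he0]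
  -- F is continuous on [0,1], hence interval integrable
  have Fcont : ContinuousOn F (Set.Icc (0:ℝ) 1) := by
    have : LipschitzOnWith (Real.toNNReal (2 * C * ε)) F (Set.Icc 0 1) := by
      rw [lipschitzOnWith_iff_dist_le_mul]
      intro x hx x' hx'
      simp only [Real.dist_eq]
      calc |F x - F x'| ≤ 2 * C * |x - x'| * ε := Fdiff x hx x' hx'
        _ = (2 * C * ε) * |x - x'| := by ring
        _ = (Real.toNNReal (2 * C * ε) : ℝ) * |x - x'| := by
            rw [Real.coe_toNNReal _ (by positivity)]
    exact this.continuousOn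
  have Fint : ∀ u ∈ Set.Icc (0:ℝ) 1, ∀ w ∈ Set.Icc (0:ℝ) 1,
      IntervalIntegrable F volume u w := by
    intro u hu w hw
    exact (Fcont.mono (Set.uIcc_subset_Icc hu hw)).intervalIntegrable
  -- rewrite the inner integral
  have inner_pull : ∀ x : ℝ, (∫ y in (0:ℝ)..1, v x y * haarFn 0 1 j k1 x * haarFn 0 1 j k2 y)
      = (∫ y in (0:ℝ)..1, v x y * haarFn 0 1 j k2 y) * haarFn 0 1 j k1 x := by
    intro x
    rw [← intervalIntegral.integral_mul_const]
    apply intervalIntegral.integral_congr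
    intro y _
    ring
  have inner_eq : ∀ x ∈ Set.Icc (0:ℝ) 1,
      (∫ y in (0:ℝ)..1, v x y * haarFn 0 1 j k2 y) = F x := by
    intro x hx
    exact haar_integral_eq j k2 hk2 (fun y => v x y) (vint x hx)
  have main_eq : (∫ x in (0:ℝ)..1, ∫ y in (0:ℝ)..1,
        v x y * haarFn 0 1 j k1 x * haarFn 0 1 j k2 y)
      = ∫ x in a..(a+ε), (F x - F (x+ε)) := by
    have step1 : (∫ x in (0:ℝ)..1, ∫ y in (0:ℝ)..1,
          v x y * haarFn 0 1 j k1 x * haarFn 0 1 j k2 y)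
        = ∫ x in (0:ℝ)..1, F x * haarFn 0 1 j k1 x := by
      apply intervalIntegral.integral_congr
      intro x hx
      rw [Set.uIcc_of_le (by norm_num : (0:ℝ) ≤ 1)] at hx
      show (∫ y in (0:ℝ)..1, v x y * haarFn 0 1 j k1 x * haarFn 0 1 j k2 y)
        = F x * haarFn 0 1 j k1 x
      rw [inner_pull x, inner_eq x hx]
    rw [step1]
    exact haar_integral_eq j k1 hk1 F Fint
  rw [main_eq]
  -- final bound
  have hbnd2 : ∀ x ∈ Set.uIoc a (a+ε), ‖F x - F (x+ε)‖ ≤ 2 * C * ε * ε := by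
    intro x hx
    rw [Set.uIoc_of_le (by linarith : a ≤ a + ε)] at hx
    have hxI : x ∈ Set.Icc (0:ℝ) 1 := ⟨by linarith [hx.1], by linarith [hx.2]⟩
    have hxeI : x + ε ∈ Set.Icc (0:ℝ) 1 := ⟨by linarith [hx.1], by linarith [hx.2]⟩
    rw [Real.norm_eq_abs]
    calc |F x - F (x+ε)| ≤ 2 * C * |x - (x+ε)| * ε := Fdiff x hxI (x+ε) hxeI
      _ = 2 * C * ε * ε := by
          rw [show x - (x+ε) = -ε by ring, abs_neg, abs_of_pos he0]
  have := intervalIntegral.norm_integral_le_of_norm_le_const hbnd2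
  rw [Real.norm_eq_abs] at this
  calc |∫ x in a..(a+ε), (F x - F (x+ε))|
      ≤ 2 * C * ε * ε * |a + ε - a| := this
    _ = 2 * C * ε ^ 3 := by rw [show a + ε - a = ε by ring, abs_of_pos he0]; ring
    _ = C / (4 * m ^ 3) := by rw [he]; field_simp; ring
end

section
/- Let v : [0,1]² → ℝ be Lipschitz continuous with constant C in the ℓ¹ sense, i.e. |v(x,y) − v(x′,y′)| ≤ C(|x − x′| + |y − y′|). Let i_1 = 2^{j_1} + k_1 + 1 and i_2 = 2^{j_2} + k_2 + 1 be wavelet indices (possibly at different levels), and set δ_1 = 2^{−j_1−1}, δ_2 = 2^{−j_2−1}. Then |∫_0^1 ∫_0^1 v(x,y) h_{i_1}(x) h_{i_2}(y) dx dy| ≤ 2C · min(δ_1, δ_2) · δ_1 δ_2. -/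
open MeasureTheory

lemma haar_abs_le_one (A B : ℝ) (j k : ℕ) (x : ℝ) : |haarFn A B j k x| ≤ 1 := by
  unfold haarFn; split_ifs <;> norm_num

lemma haar_mul_eq (f : ℝ → ℝ) (j k : ℕ) (x : ℝ) :
    f x * haarFn 0 1 j k x
      = (Set.Ico ((k:ℝ)/2^j) ((k:ℝ)/2^j + 2^(-(j:ℤ)-1))).indicator f x
        - (Set.Ico ((k:ℝ)/2^j + 2^(-(j:ℤ)-1)) ((k:ℝ)/2^j + 2^(-(j:ℤ)-1) + 2^(-(j:ℤ)-1))).indicator f x := by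
  have hδ : (2:ℝ)^(-(j:ℤ)-1) = 1/(2*2^j) := by
    rw [zpow_sub₀ (two_ne_zero), zpow_neg, zpow_natCast, zpow_one]
    ring
  have e1 : (0:ℝ) + (k:ℝ) * (1-0)/2^j = (k:ℝ)/2^j := by ring
  have e2 : (0:ℝ) + ((k:ℝ) + 1/2) * (1-0)/2^j = (k:ℝ)/2^j + 2^(-(j:ℤ)-1) := by
    rw [hδ]; field_simp; ring
  have e3 : (0:ℝ) + ((k:ℝ) + 1) * (1-0)/2^j = (k:ℝ)/2^j + 2^(-(j:ℤ)-1) + 2^(-(j:ℤ)-1) := by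
    rw [hδ]; field_simp; ring
  unfold haarFn
  rw [e1, e2, e3]
  simp only [Set.indicator_apply, Set.mem_Ico]
  split_ifs with h1 h2 h3 <;> try ring
  · exact absurd h2.1 (not_le.mpr h1.2)

lemma Ico_inter_ae (a b : ℝ) (h0 : 0 ≤ a) (hb1 : b ≤ 1) :
    (Set.Ico a b ∩ Set.Ioc 0 1 : Set ℝ) =ᵐ[volume] Set.Ioc a b := by
  rw [MeasureTheory.ae_eq_set]
  constructor
  · refine measure_mono_null ?_ (measure_singleton a)
    rintro x ⟨⟨⟨hax, hxb⟩, h0x, hx1⟩, hn⟩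
    simp only [Set.mem_Ioc, not_and, not_le] at hn
    have : ¬ a < x := fun h => absurd (hn h) (not_lt.mpr hxb.le)
    simpa using le_antisymm (not_lt.mp this) hax
  · refine measure_mono_null ?_ (measure_singleton b)
    rintro x ⟨⟨hax, hxb⟩, hn⟩
    have hx01 : x ∈ Set.Ioc (0:ℝ) 1 := ⟨lt_of_le_of_lt h0 hax, le_trans hxb hb1⟩
    have hni : x ∉ Set.Ico a b := fun h => hn ⟨h, hx01⟩
    simp only [Set.mem_Ico, not_and, not_lt] at hni
    simpa using le_antisymm hxb (hni hax.le)

lemma integral_indicator_Ico' (f : ℝ → ℝ) (a b : ℝ) (h0 : 0 ≤ a) (hab : a ≤ b) (hb1 : b ≤ 1) :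
    ∫ x in (0:ℝ)..1, (Set.Ico a b).indicator f x = ∫ x in a..b, f x := by
  rw [intervalIntegral.integral_of_le (by norm_num : (0:ℝ) ≤ 1),
      intervalIntegral.integral_of_le hab,
      MeasureTheory.integral_indicator measurableSet_Ico,
      Measure.restrict_restrict measurableSet_Ico,
      Measure.restrict_congr_set (Ico_inter_ae a b h0 hb1)]

lemma haar_bounds (j k : ℕ) (hk : k < 2 ^ j) :
    0 ≤ (k:ℝ)/2^j ∧ 0 < (2:ℝ)^(-(j:ℤ)-1) ∧
      (k:ℝ)/2^j + 2^(-(j:ℤ)-1) + 2^(-(j:ℤ)-1) ≤ 1 := by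
  have hδ : (2:ℝ)^(-(j:ℤ)-1) = 1/(2*2^j) := by
    rw [zpow_sub₀ (two_ne_zero), zpow_neg, zpow_natCast, zpow_one]; ring
  have hp : (0:ℝ) < 2^j := by positivity
  refine ⟨by positivity, by rw [hδ]; positivity, ?_⟩
  rw [hδ]
  have hk' : (k:ℝ) + 1 ≤ 2^j := by
    have h1 : (k+1 : ℕ) ≤ 2^j := hk
    exact_mod_cast (by exact_mod_cast h1 : ((k+1:ℕ):ℝ) ≤ ((2^j:ℕ):ℝ))
  have he : (k:ℝ)/2^j + 1/(2*2^j) + 1/(2*2^j) = ((k:ℝ)+1)/2^j := by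
    field_simp; ring
  rw [he, div_le_one hp]
  exact hk'

lemma indicator_intInt (f : ℝ → ℝ) (a b : ℝ) (hf : IntegrableOn f (Set.Icc 0 1)) :
    IntervalIntegrable ((Set.Ico a b).indicator f) volume 0 1 := by
  rw [intervalIntegrable_iff]
  have hsub : Set.Ico a b ∩ Set.uIoc (0:ℝ) 1 ⊆ Set.Icc 0 1 := by
    rw [Set.uIoc_of_le (by norm_num : (0:ℝ) ≤ 1)]
    intro x hx
    exact ⟨hx.2.1.le, hx.2.2⟩
  have h2 : IntegrableOn f (Set.Ico a b) (volume.restrict (Set.uIoc 0 1)) := by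
    rw [IntegrableOn, Measure.restrict_restrict measurableSet_Ico]
    exact hf.mono_set hsub
  exact (integrable_indicator_iff measurableSet_Ico).mpr h2

lemma haar_mul_intervalIntegrable (f : ℝ → ℝ) (j k : ℕ)
    (hf : IntegrableOn f (Set.Icc 0 1)) :
    IntervalIntegrable (fun x => f x * haarFn 0 1 j k x) volume 0 1 := by
  have he : (fun x => f x * haarFn 0 1 j k x)
      = fun x => (Set.Ico ((k:ℝ)/2^j) ((k:ℝ)/2^j + 2^(-(j:ℤ)-1))).indicator f x
        - (Set.Ico ((k:ℝ)/2^j + 2^(-(j:ℤ)-1)) ((k:ℝ)/2^j + 2^(-(j:ℤ)-1) + 2^(-(j:ℤ)-1))).indicator f x :=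
    funext fun x => haar_mul_eq f j k x
  rw [he]
  exact (indicator_intInt f _ _ hf).sub (indicator_intInt f _ _ hf)

lemma lemA (f : ℝ → ℝ) (j k : ℕ) (hk : k < 2 ^ j) (hf : ContinuousOn f (Set.Icc 0 1)) :
    ∫ x in (0:ℝ)..1, f x * haarFn 0 1 j k x
      = ∫ t in ((k:ℝ)/2^j)..((k:ℝ)/2^j + (2:ℝ)^(-(j:ℤ)-1)),
          (f t - f (t + (2:ℝ)^(-(j:ℤ)-1))) := by
  obtain ⟨h0a, hδpos, hc1⟩ := haar_bounds j k hk
  set a := (k:ℝ)/2^j with ha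
  set δ := (2:ℝ)^(-(j:ℤ)-1) with hδ
  have hfI : IntegrableOn f (Set.Icc 0 1) := hf.integrableOn_Icc
  have hi1 := indicator_intInt f a (a+δ) hfI
  have hi2 := indicator_intInt f (a+δ) (a+δ+δ) hfI
  calc ∫ x in (0:ℝ)..1, f x * haarFn 0 1 j k x
      = ∫ x in (0:ℝ)..1, ((Set.Ico a (a+δ)).indicator f x
          - (Set.Ico (a+δ) (a+δ+δ)).indicator f x) := by
        apply intervalIntegral.integral_congr
        intro x _
        exact haar_mul_eq f j k x
    _ = (∫ x in (0:ℝ)..1, (Set.Ico a (a+δ)).indicator f x)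
          - ∫ x in (0:ℝ)..1, (Set.Ico (a+δ) (a+δ+δ)).indicator f x :=
        intervalIntegral.integral_sub hi1 hi2
    _ = (∫ x in a..(a+δ), f x) - ∫ x in (a+δ)..(a+δ+δ), f x := by
        rw [integral_indicator_Ico' f a (a+δ) h0a (by linarith) (by linarith),
            integral_indicator_Ico' f (a+δ) (a+δ+δ) (by linarith) (by linarith) (by linarith)]
    _ = (∫ x in a..(a+δ), f x) - ∫ x in a..(a+δ), f (x+δ) := by
        rw [intervalIntegral.integral_comp_add_right]
    _ = ∫ x in a..(a+δ), (f x - f (x+δ)) := by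
        rw [intervalIntegral.integral_sub]
        · exact (hf.mono (Set.Icc_subset_Icc h0a (by linarith))).intervalIntegrable_of_Icc (by linarith)
        · apply ContinuousOn.intervalIntegrable_of_Icc (by linarith : a ≤ a + δ)
          apply hf.comp (continuous_add_right δ).continuousOn
          intro y hy
          rw [Set.mem_Icc] at hy
          rw [Set.mem_Icc]
          constructor
          · show (0:ℝ) ≤ y + δ; linarith [hy.1]
          · show y + δ ≤ 1; linarith [hy.2]

/-- If `v` is Lipschitz on `[0,1]²` with constant `C` in the `ℓ¹` sense, then the
two-dimensional Haar coefficient at (possibly different) levels `j₁, j₂`, with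
half-support lengths `δᵢ = 2^{-jᵢ-1}`, is bounded by `2C·min(δ₁,δ₂)·δ₁δ₂`. -/
theorem haar_coeff2d_mixed_level_bound (C : ℝ) (v : ℝ → ℝ → ℝ)
    (hv : ∀ x ∈ Set.Icc (0 : ℝ) 1, ∀ y ∈ Set.Icc (0 : ℝ) 1,
      ∀ x' ∈ Set.Icc (0 : ℝ) 1, ∀ y' ∈ Set.Icc (0 : ℝ) 1,
      |v x y - v x' y'| ≤ C * (|x - x'| + |y - y'|))
    (j1 k1 j2 k2 : ℕ) (hk1 : k1 < 2 ^ j1) (hk2 : k2 < 2 ^ j2)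
    (δ1 δ2 : ℝ) (hδ1 : δ1 = (2 : ℝ) ^ (-(j1 : ℤ) - 1))
    (hδ2 : δ2 = (2 : ℝ) ^ (-(j2 : ℤ) - 1)) :
    |∫ x in (0 : ℝ)..1, ∫ y in (0 : ℝ)..1,
        v x y * haarFn 0 1 j1 k1 x * haarFn 0 1 j2 k2 y| ≤
      2 * C * min δ1 δ2 * (δ1 * δ2) := by
  have hC : 0 ≤ C := by
    have h := hv 0 (by norm_num) 0 (by norm_num) 1 (by norm_num) 0 (by norm_num)
    have h0 := abs_nonneg (v 0 0 - v 1 0)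
    simp only [sub_self, abs_zero, add_zero, zero_sub, abs_neg, abs_one, mul_one] at h
    linarith
  subst hδ1 hδ2
  obtain ⟨ha1, hd1pos, hc1⟩ := haar_bounds j1 k1 hk1
  obtain ⟨ha2, hd2pos, hc2⟩ := haar_bounds j2 k2 hk2
  set a1 := (k1:ℝ)/2^j1 with ha1def
  set d1 := (2:ℝ)^(-(j1:ℤ)-1) with hd1def
  set a2 := (k2:ℝ)/2^j2 with ha2def
  set d2 := (2:ℝ)^(-(j2:ℤ)-1) with hd2def
  -- continuity of slices
  have hvcont : ∀ x ∈ Set.Icc (0:ℝ) 1, ContinuousOn (fun y => v x y) (Set.Icc 0 1) := by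
    intro x hx
    have hlip : LipschitzOnWith (Real.toNNReal C) (fun y => v x y) (Set.Icc 0 1) := by
      rw [lipschitzOnWith_iff_dist_le_mul]
      intro y hy y' hy'
      rw [Real.dist_eq, Real.dist_eq]
      have h := hv x hx y hy x hx y' hy'
      rw [sub_self, abs_zero, zero_add] at h
      exact le_trans h (mul_le_mul_of_nonneg_right (Real.le_coe_toNNReal C) (abs_nonneg _))
    exact hlip.continuousOn
  set H := fun x => ∫ y in (0:ℝ)..1, v x y * haarFn 0 1 j2 k2 y with hHdef
  have hi : ∀ z ∈ Set.Icc (0:ℝ) 1,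
      IntervalIntegrable (fun y => v z y * haarFn 0 1 j2 k2 y) volume 0 1 :=
    fun z hz => haar_mul_intervalIntegrable _ j2 k2 ((hvcont z hz).integrableOn_Icc)
  have hHcont : ContinuousOn H (Set.Icc 0 1) := by
    have hlip : LipschitzOnWith (Real.toNNReal C) H (Set.Icc 0 1) := by
      rw [lipschitzOnWith_iff_dist_le_mul]
      intro x hx x' hx'
      rw [Real.dist_eq, Real.dist_eq]
      have hsub : H x - H x' = ∫ y in (0:ℝ)..1,
          (v x y * haarFn 0 1 j2 k2 y - v x' y * haarFn 0 1 j2 k2 y) :=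
        (intervalIntegral.integral_sub (hi x hx) (hi x' hx')).symm
      rw [hsub]
      have hb : ∀ y ∈ Set.uIoc (0:ℝ) 1,
          ‖v x y * haarFn 0 1 j2 k2 y - v x' y * haarFn 0 1 j2 k2 y‖ ≤ C * |x - x'| := by
        intro y hy
        rw [Set.uIoc_of_le (by norm_num : (0:ℝ) ≤ 1)] at hy
        have hyI : y ∈ Set.Icc (0:ℝ) 1 := ⟨hy.1.le, hy.2⟩
        rw [Real.norm_eq_abs,
          show v x y * haarFn 0 1 j2 k2 y - v x' y * haarFn 0 1 j2 k2 y
            = (v x y - v x' y) * haarFn 0 1 j2 k2 y by ring, abs_mul]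
        have h1 : |v x y - v x' y| ≤ C * |x - x'| := by
          have h := hv x hx y hyI x' hx' y hyI
          rwa [sub_self, abs_zero, add_zero] at h
        calc |v x y - v x' y| * |haarFn 0 1 j2 k2 y|
            ≤ (C * |x - x'|) * 1 :=
              mul_le_mul h1 (haar_abs_le_one _ _ _ _ _) (abs_nonneg _)
                (mul_nonneg hC (abs_nonneg _))
          _ = C * |x - x'| := mul_one _
      have hle := intervalIntegral.norm_integral_le_of_norm_le_const hb
      rw [Real.norm_eq_abs] at hle
      calc |∫ y in (0:ℝ)..1, (v x y * haarFn 0 1 j2 k2 y - v x' y * haarFn 0 1 j2 k2 y)|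
          ≤ C * |x - x'| * |1 - 0| := hle
        _ = C * |x - x'| := by norm_num
        _ ≤ (Real.toNNReal C) * |x - x'| :=
            mul_le_mul_of_nonneg_right (Real.le_coe_toNNReal C) (abs_nonneg _)
    exact hlip.continuousOn
  have step1 : (∫ x in (0:ℝ)..1, ∫ y in (0:ℝ)..1,
        v x y * haarFn 0 1 j1 k1 x * haarFn 0 1 j2 k2 y)
      = ∫ x in (0:ℝ)..1, H x * haarFn 0 1 j1 k1 x := by
    apply intervalIntegral.integral_congr
    intro x _
    calc ∫ y in (0:ℝ)..1, v x y * haarFn 0 1 j1 k1 x * haarFn 0 1 j2 k2 y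
        = ∫ y in (0:ℝ)..1, (v x y * haarFn 0 1 j2 k2 y) * haarFn 0 1 j1 k1 x := by
          apply intervalIntegral.integral_congr
          intro y _
          ring
      _ = H x * haarFn 0 1 j1 k1 x := intervalIntegral.integral_mul_const _ _
  rw [step1, lemA H j1 k1 hk1 hHcont]
  -- integrability of the difference slices
  have hint : ∀ z ∈ Set.Icc (0:ℝ) 1,
      IntervalIntegrable (fun y => v z y - v z (y + d2)) volume a2 (a2 + d2) := by
    intro z hz
    apply ContinuousOn.intervalIntegrable_of_Icc (by linarith : a2 ≤ a2 + d2)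
    apply ContinuousOn.sub
    · exact (hvcont z hz).mono (Set.Icc_subset_Icc ha2 (by linarith))
    · apply (hvcont z hz).comp (continuous_add_right d2).continuousOn
      intro y hy
      rw [Set.mem_Icc] at hy
      rw [Set.mem_Icc]
      constructor
      · show (0:ℝ) ≤ y + d2; linarith [hy.1]
      · show y + d2 ≤ 1; linarith [hy.2]
  have key : ∀ x ∈ Set.uIoc a1 (a1 + d1), ‖H x - H (x + d1)‖ ≤ 2 * C * min d1 d2 * d2 := by
    intro x hx
    rw [Set.uIoc_of_le (by linarith : a1 ≤ a1 + d1)] at hx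
    have hxI : x ∈ Set.Icc (0:ℝ) 1 := ⟨by linarith [hx.1], by linarith [hx.2]⟩
    have hx1I : x + d1 ∈ Set.Icc (0:ℝ) 1 := ⟨by linarith [hx.1], by linarith [hx.2]⟩
    have e1 : H x = ∫ y in a2..(a2 + d2), (v x y - v x (y + d2)) :=
      lemA (fun y => v x y) j2 k2 hk2 (hvcont x hxI)
    have e2 : H (x + d1) = ∫ y in a2..(a2 + d2), (v (x + d1) y - v (x + d1) (y + d2)) :=
      lemA (fun y => v (x + d1) y) j2 k2 hk2 (hvcont (x + d1) hx1I)
    rw [e1, e2, ← intervalIntegral.integral_sub (hint x hxI) (hint _ hx1I)]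
    have hb : ∀ y ∈ Set.uIoc a2 (a2 + d2),
        ‖(v x y - v x (y + d2)) - (v (x + d1) y - v (x + d1) (y + d2))‖
          ≤ 2 * C * min d1 d2 := by
      intro y hy
      rw [Set.uIoc_of_le (by linarith : a2 ≤ a2 + d2)] at hy
      have hyI : y ∈ Set.Icc (0:ℝ) 1 := ⟨by linarith [hy.1], by linarith [hy.2]⟩
      have hy2I : y + d2 ∈ Set.Icc (0:ℝ) 1 := ⟨by linarith [hy.1], by linarith [hy.2]⟩
      rw [Real.norm_eq_abs]
      rcases le_total d1 d2 with hmin | hmin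
      · rw [min_eq_left hmin]
        have h1 := hv x hxI y hyI (x + d1) hx1I y hyI
        have h2 := hv x hxI (y + d2) hy2I (x + d1) hx1I (y + d2) hy2I
        rw [show x - (x + d1) = -d1 by ring, sub_self, abs_neg,
          abs_of_pos hd1pos, abs_zero, add_zero] at h1
        rw [show x - (x + d1) = -d1 by ring, sub_self, abs_neg,
          abs_of_pos hd1pos, abs_zero, add_zero] at h2
        calc |(v x y - v x (y + d2)) - (v (x + d1) y - v (x + d1) (y + d2))|
            = |(v x y - v (x + d1) y) - (v x (y + d2) - v (x + d1) (y + d2))| := by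
              congr 1; ring
          _ ≤ |v x y - v (x + d1) y| + |v x (y + d2) - v (x + d1) (y + d2)| :=
              abs_sub _ _
          _ ≤ 2 * C * d1 := by linarith
      · rw [min_eq_right hmin]
        have h1 := hv x hxI y hyI x hxI (y + d2) hy2I
        have h2 := hv (x + d1) hx1I y hyI (x + d1) hx1I (y + d2) hy2I
        rw [show y - (y + d2) = -d2 by ring, sub_self, abs_neg,
          abs_of_pos hd2pos, abs_zero, zero_add] at h1
        rw [show y - (y + d2) = -d2 by ring, sub_self, abs_neg,
          abs_of_pos hd2pos, abs_zero, zero_add] at h2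
        calc |(v x y - v x (y + d2)) - (v (x + d1) y - v (x + d1) (y + d2))|
            ≤ |v x y - v x (y + d2)| + |v (x + d1) y - v (x + d1) (y + d2)| :=
              abs_sub _ _
          _ ≤ 2 * C * d2 := by linarith
    have hle := intervalIntegral.norm_integral_le_of_norm_le_const hb
    calc ‖∫ y in a2..(a2 + d2),
          ((v x y - v x (y + d2)) - (v (x + d1) y - v (x + d1) (y + d2)))‖
        ≤ 2 * C * min d1 d2 * |a2 + d2 - a2| := hle
      _ = 2 * C * min d1 d2 * d2 := by
          rw [show a2 + d2 - a2 = d2 by ring, abs_of_pos hd2pos]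
  have hfinal := intervalIntegral.norm_integral_le_of_norm_le_const key
  rw [Real.norm_eq_abs] at hfinal
  calc |∫ t in a1..(a1 + d1), (H t - H (t + d1))|
      ≤ 2 * C * min d1 d2 * d2 * |a1 + d1 - a1| := hfinal
    _ = 2 * C * min d1 d2 * (d1 * d2) := by
        rw [show a1 + d1 - a1 = d1 by ring, abs_of_pos hd1pos]; ring
end

section
/- Let f : [0,1] → ℝ be Lipschitz continuous with Lipschitz constant C, and for j ≥ 0, 0 ≤ k ≤ 2^j − 1 let a_{j,k} = 2^j ∫_0^1 f(x) h_{2^j+k+1}(x) dx be the normalized Haar coefficients of f. Then for every J ≥ 0, the weighted tail sum of squared coefficients satisfies Σ_{j=J+1}^{∞} Σ_{k=0}^{2^j−1} a_{j,k}² · 2^{−j} ≤ C²/(48 · 4^J). -/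
open MeasureTheory

lemma haar_integral_bound (C : ℝ) (f : ℝ → ℝ)
    (hf : ∀ x ∈ Set.Icc (0 : ℝ) 1, ∀ x' ∈ Set.Icc (0 : ℝ) 1,
      |f x - f x'| ≤ C * |x - x'|)
    (hC0 : 0 ≤ C) (j k : ℕ) (hk : k < 2 ^ j) :
    |∫ x in (0 : ℝ)..1, f x * haarFn 0 1 j k x| ≤ C * (2⁻¹ / 2 ^ j) ^ 2 := by
  have h2 : (0:ℝ) < 2 ^ j := by positivity
  set d : ℝ := 2⁻¹ / 2 ^ j with hd_def
  set L : ℝ := k / 2 ^ j with hL_def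
  set M : ℝ := L + d with hM_def
  set R : ℝ := M + d with hR_def
  have hd : 0 < d := by positivity
  have hL0 : 0 ≤ L := by positivity
  have hLM : L < M := by simp [hM_def]; linarith
  have hMR : M < R := by simp [hR_def]; linarith
  have hRval : R = ((k:ℝ) + 1) / 2 ^ j := by
    rw [hR_def, hM_def, hL_def, hd_def]; field_simp; ring
  have hR1 : R ≤ 1 := by
    rw [hRval, div_le_one h2]
    have : (k:ℝ) + 1 ≤ (2:ℝ) ^ j := by exact_mod_cast hk
    linarith
  have hM1 : M ≤ 1 := le_trans hMR.le hR1
  have hM0 : 0 ≤ M := le_trans hL0 hLM.le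
  have hhaar : ∀ x : ℝ, haarFn 0 1 j k x
      = if L ≤ x ∧ x < M then 1 else if M ≤ x ∧ x < R then -1 else 0 := by
    intro x
    have e1 : (0:ℝ) + (k:ℝ) * (1 - 0) / 2 ^ j = L := by rw [hL_def]; ring
    have e2 : (0:ℝ) + ((k:ℝ) + 1/2) * (1 - 0) / 2 ^ j = M := by
      rw [hM_def, hL_def, hd_def]; field_simp; ring
    have e3 : (0:ℝ) + ((k:ℝ) + 1) * (1 - 0) / 2 ^ j = R := by
      rw [hRval]; ring
    unfold haarFn
    rw [e1, e2, e3]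
  -- continuity
  have hcont : ContinuousOn f (Set.Icc 0 1) := by
    have hlip : LipschitzOnWith (Real.toNNReal C) f (Set.Icc 0 1) := by
      rw [lipschitzOnWith_iff_dist_le_mul]
      intro x hx y hy
      rw [Real.dist_eq, Real.dist_eq]
      calc |f x - f y| ≤ C * |x - y| := hf x hx y hy
        _ = (Real.toNNReal C : ℝ) * |x - y| := by rw [Real.coe_toNNReal C hC0]
    exact hlip.continuousOn
  have hsub1 : Set.Icc L M ⊆ Set.Icc (0:ℝ) 1 := Set.Icc_subset_Icc hL0 hM1
  have hsub2 : Set.Icc M R ⊆ Set.Icc (0:ℝ) 1 := Set.Icc_subset_Icc hM0 hR1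
  have hi1 : IntegrableOn f (Set.Ioo L M) volume :=
    ((hcont.mono hsub1).integrableOn_Icc).mono_set Set.Ioo_subset_Icc_self
  have hi2 : IntegrableOn f (Set.Ioo M R) volume :=
    ((hcont.mono hsub2).integrableOn_Icc).mono_set Set.Ioo_subset_Icc_self
  have hss1 : Set.Ioo L M ⊆ Set.Ioc (0:ℝ) 1 :=
    fun x hx => ⟨lt_of_le_of_lt hL0 hx.1, hx.2.le.trans hM1⟩
  have hss2 : Set.Ioo M R ⊆ Set.Ioc (0:ℝ) 1 :=
    fun x hx => ⟨lt_of_le_of_lt hM0 hx.1, hx.2.le.trans hR1⟩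
  have key1 : (∫ x in (0:ℝ)..1, f x * haarFn 0 1 j k x)
      = (∫ x in Set.Ioo L M, f x) - ∫ x in Set.Ioo M R, f x := by
    rw [intervalIntegral.integral_of_le (by norm_num : (0:ℝ) ≤ 1)]
    have hae : (fun x => f x * haarFn 0 1 j k x) =ᵐ[volume.restrict (Set.Ioc 0 1)]
        (fun x => Set.indicator (Set.Ioo L M) f x - Set.indicator (Set.Ioo M R) f x) := by
      apply Filter.EventuallyEq.filter_mono _ (ae_mono Measure.restrict_le_self)
      have hnull : volume ({L, M} : Set ℝ) = 0 :=
        ((Set.finite_singleton M).insert L).measure_zero _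
      refine ae_iff.mpr (measure_mono_null (fun x hx => ?_) hnull)
      by_contra hx'
      apply hx
      simp only [Set.mem_insert_iff, Set.mem_singleton_iff, not_or] at hx'
      obtain ⟨hxL, hxM⟩ := hx'
      simp only [hhaar x]
      by_cases h1 : L ≤ x ∧ x < M
      · have hm1 : x ∈ Set.Ioo L M := ⟨lt_of_le_of_ne h1.1 (Ne.symm hxL), h1.2⟩
        have hm2 : x ∉ Set.Ioo M R := fun h => absurd h1.2 (not_lt.2 h.1.le)
        simp [h1, Set.indicator_of_mem hm1, Set.indicator_of_notMem hm2]
      · by_cases h2 : M ≤ x ∧ x < R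
        · have hm2 : x ∈ Set.Ioo M R := ⟨lt_of_le_of_ne h2.1 (Ne.symm hxM), h2.2⟩
          have hm1 : x ∉ Set.Ioo L M := fun h => absurd h.2 (not_lt.2 h2.1)
          simp [h1, h2, Set.indicator_of_mem hm2, Set.indicator_of_notMem hm1]
        · have hm1 : x ∉ Set.Ioo L M := fun h => h1 ⟨h.1.le, h.2⟩
          have hm2 : x ∉ Set.Ioo M R := fun h => h2 ⟨h.1.le, h.2⟩
          simp [h1, h2, Set.indicator_of_notMem hm1, Set.indicator_of_notMem hm2]
    rw [MeasureTheory.integral_congr_ae hae]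
    have hind1 : Integrable (Set.indicator (Set.Ioo L M) f) (volume.restrict (Set.Ioc 0 1)) := by
      rw [integrable_indicator_iff measurableSet_Ioo]
      rw [MeasureTheory.IntegrableOn, Measure.restrict_restrict measurableSet_Ioo,
        Set.inter_eq_left.2 hss1]
      exact hi1
    have hind2 : Integrable (Set.indicator (Set.Ioo M R) f) (volume.restrict (Set.Ioc 0 1)) := by
      rw [integrable_indicator_iff measurableSet_Ioo]
      rw [MeasureTheory.IntegrableOn, Measure.restrict_restrict measurableSet_Ioo,
        Set.inter_eq_left.2 hss2]
      exact hi2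
    rw [MeasureTheory.integral_sub hind1 hind2,
      MeasureTheory.integral_indicator measurableSet_Ioo,
      MeasureTheory.integral_indicator measurableSet_Ioo,
      Measure.restrict_restrict measurableSet_Ioo,
      Measure.restrict_restrict measurableSet_Ioo,
      Set.inter_eq_left.2 hss1, Set.inter_eq_left.2 hss2]
  have key2 : (∫ x in Set.Ioo L M, f x) = ∫ x in L..M, f x := by
    rw [intervalIntegral.integral_of_le hLM.le, MeasureTheory.integral_Ioc_eq_integral_Ioo]
  have key3 : (∫ x in Set.Ioo M R, f x) = ∫ x in L..M, f (x + d) := by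
    rw [intervalIntegral.integral_comp_add_right (fun y => f y) d,
      intervalIntegral.integral_of_le (by linarith : M ≤ R),
      MeasureTheory.integral_Ioc_eq_integral_Ioo]
  have hii1 : IntervalIntegrable f volume L M := by
    apply ContinuousOn.intervalIntegrable
    rw [Set.uIcc_of_le hLM.le]
    exact hcont.mono hsub1
  have hii2 : IntervalIntegrable (fun x => f (x + d)) volume L M := by
    apply ContinuousOn.intervalIntegrable
    rw [Set.uIcc_of_le hLM.le]
    apply (hcont.mono hsub2).comp ((continuous_add_right d).continuousOn)
    intro x hx
    simp only [Set.mem_Icc] at hx ⊢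
    constructor
    · rw [hM_def]; linarith [hx.1]
    · rw [hR_def, hM_def]; linarith [hx.2]
  have key4 : (∫ x in (0:ℝ)..1, f x * haarFn 0 1 j k x)
      = ∫ x in L..M, (f x - f (x + d)) := by
    rw [key1, key2, key3, intervalIntegral.integral_sub hii1 hii2]
  rw [key4, ← Real.norm_eq_abs]
  have hbd : ∀ x ∈ Set.uIoc L M, ‖f x - f (x + d)‖ ≤ C * d := by
    intro x hx
    rw [Set.uIoc_of_le hLM.le] at hx
    have hx01 : x ∈ Set.Icc (0:ℝ) 1 := ⟨(lt_of_le_of_lt hL0 hx.1).le, hx.2.trans hM1⟩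
    have hxd01 : x + d ∈ Set.Icc (0:ℝ) 1 :=
      ⟨by linarith [hx01.1, hd.le], by rw [hR_def] at hR1; linarith [hx.2]⟩
    calc ‖f x - f (x + d)‖ = |f x - f (x + d)| := rfl
      _ ≤ C * |x - (x + d)| := hf x hx01 (x + d) hxd01
      _ = C * d := by rw [show x - (x + d) = -d by ring, abs_neg, abs_of_pos hd]
  calc ‖∫ x in L..M, (f x - f (x + d))‖ ≤ C * d * |M - L| :=
        intervalIntegral.norm_integral_le_of_norm_le_const hbd
    _ = C * d ^ 2 := by
        rw [show M - L = d by rw [hM_def]; ring, abs_of_pos hd]; ring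
    _ = C * (2⁻¹ / 2 ^ j) ^ 2 := by rw [hd_def]

/-- For a Lipschitz function `f` on `[0,1]` with constant `C` and normalized Haar
coefficients `a_{j,k} = 2^j ∫_0^1 f h_{2^j+k+1}`, the weighted tail sum
`Σ_{j=J+1}^∞ Σ_{k=0}^{2^j-1} a_{j,k}² 2^{-j}` (the squared `L²` norm of the tail of
the Haar expansion) is at most `C²/(48·4^J)`. Here the outer sum over `j > J` is
written as a `tsum` over `n : ℕ` with `j = J + 1 + n`. -/
theorem haar_tail_l2_bound (C : ℝ) (f : ℝ → ℝ)
    (hf : ∀ x ∈ Set.Icc (0 : ℝ) 1, ∀ x' ∈ Set.Icc (0 : ℝ) 1,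
      |f x - f x'| ≤ C * |x - x'|)
    (a : ℕ → ℕ → ℝ)
    (ha : ∀ j k : ℕ, a j k = 2 ^ j * ∫ x in (0 : ℝ)..1, f x * haarFn 0 1 j k x)
    (J : ℕ) :
    (∑' n : ℕ, ∑ k ∈ Finset.range (2 ^ (J + 1 + n)),
        (a (J + 1 + n) k) ^ 2 * (2 : ℝ) ^ (-(J + 1 + n : ℤ))) ≤
      C ^ 2 / (48 * 4 ^ J) := by
  have hC0 : 0 ≤ C := by
    have h := hf 0 (by norm_num) 1 (by norm_num)
    have h0 : (0:ℝ) ≤ |f 0 - f 1| := abs_nonneg _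
    simp only [show |(0:ℝ) - 1| = 1 by norm_num, mul_one] at h
    linarith
  -- termwise bound
  have hterm : ∀ n : ℕ, (∑ k ∈ Finset.range (2 ^ (J + 1 + n)),
      (a (J + 1 + n) k) ^ 2 * (2 : ℝ) ^ (-(J + 1 + n : ℤ)))
      ≤ C ^ 2 / 16 * (1/4 : ℝ) ^ (J + 1 + n) := by
    intro n
    set j : ℕ := J + 1 + n with hj
    have hp : (0:ℝ) < 2 ^ j := by positivity
    have hzpow : (2 : ℝ) ^ (-(J + 1 + n : ℤ)) = ((2:ℝ) ^ j)⁻¹ := by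
      rw [show (-(J + 1 + n : ℤ)) = -((j:ℕ) : ℤ) by rw [hj]; push_cast; ring,
        zpow_neg, zpow_natCast]
    clear_value j
    have hbd : ∀ k ∈ Finset.range (2 ^ j),
        (a j k) ^ 2 * ((2:ℝ) ^ j)⁻¹ ≤ C ^ 2 / (16 * 4 ^ j) * ((2:ℝ) ^ j)⁻¹ := by
      intro k hk
      have hI := haar_integral_bound C f hf hC0 j k (Finset.mem_range.mp hk)
      have habs : |a j k| ≤ C / (4 * 2 ^ j) := by
        rw [ha j k, abs_mul, abs_of_pos hp]
        calc (2:ℝ) ^ j * |∫ x in (0:ℝ)..1, f x * haarFn 0 1 j k x|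
            ≤ 2 ^ j * (C * (2⁻¹ / 2 ^ j) ^ 2) := by
              exact mul_le_mul_of_nonneg_left hI hp.le
          _ = C / (4 * 2 ^ j) := by field_simp; ring
      have hsq : (a j k) ^ 2 ≤ C ^ 2 / (16 * 4 ^ j) := by
        have h2 : |a j k| ^ 2 ≤ (C / (4 * 2 ^ j)) ^ 2 :=
          pow_le_pow_left₀ (abs_nonneg _) habs 2
        have h4 : (4:ℝ) ^ j = 2 ^ j * 2 ^ j := by
          rw [show (4:ℝ) = 2 * 2 by norm_num, mul_pow]
        have h3 : (C / (4 * 2 ^ j)) ^ 2 = C ^ 2 / (16 * 4 ^ j) := by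
          rw [div_pow]; congr 1; rw [h4]; ring
        rw [← sq_abs (a j k)]
        rw [h3] at h2
        exact h2
      exact mul_le_mul_of_nonneg_right hsq (by positivity)
    calc (∑ k ∈ Finset.range (2 ^ j), (a j k) ^ 2 * (2 : ℝ) ^ (-(J + 1 + n : ℤ)))
        = ∑ k ∈ Finset.range (2 ^ j), (a j k) ^ 2 * ((2:ℝ) ^ j)⁻¹ := by
          simp_rw [hzpow]
      _ ≤ ∑ k ∈ Finset.range (2 ^ j), C ^ 2 / (16 * 4 ^ j) * ((2:ℝ) ^ j)⁻¹ :=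
          Finset.sum_le_sum hbd
      _ = (2 ^ j : ℕ) * (C ^ 2 / (16 * 4 ^ j) * ((2:ℝ) ^ j)⁻¹) := by
          rw [Finset.sum_const, Finset.card_range, nsmul_eq_mul]
      _ = C ^ 2 / 16 * (1/4 : ℝ) ^ j := by
          have h4 : (4:ℝ) ^ j = 2 ^ j * 2 ^ j := by
            rw [show (4:ℝ) = 2 * 2 by norm_num, mul_pow]
          have h5 : (1/4 : ℝ) ^ j = ((4:ℝ) ^ j)⁻¹ := by rw [one_div, inv_pow]
          rw [Nat.cast_pow, Nat.cast_ofNat, h5, h4]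
          field_simp
  have hsumR : Summable (fun n : ℕ => C ^ 2 / 16 * (1/4 : ℝ) ^ (J + 1 + n)) := by
    simp_rw [pow_add]
    exact ((summable_geometric_of_lt_one (by norm_num) (by norm_num)).mul_left _).mul_left _
  have hnonneg : ∀ n : ℕ, 0 ≤ ∑ k ∈ Finset.range (2 ^ (J + 1 + n)),
      (a (J + 1 + n) k) ^ 2 * (2 : ℝ) ^ (-(J + 1 + n : ℤ)) := by
    intro n
    apply Finset.sum_nonneg
    intro k _
    positivity
  have hsumL : Summable (fun n : ℕ => ∑ k ∈ Finset.range (2 ^ (J + 1 + n)),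
      (a (J + 1 + n) k) ^ 2 * (2 : ℝ) ^ (-(J + 1 + n : ℤ))) :=
    Summable.of_nonneg_of_le hnonneg hterm hsumR
  calc (∑' n : ℕ, ∑ k ∈ Finset.range (2 ^ (J + 1 + n)),
        (a (J + 1 + n) k) ^ 2 * (2 : ℝ) ^ (-(J + 1 + n : ℤ)))
      ≤ ∑' n : ℕ, C ^ 2 / 16 * (1/4 : ℝ) ^ (J + 1 + n) :=
        Summable.tsum_le_tsum hterm hsumL hsumR
    _ = C ^ 2 / (48 * 4 ^ J) := by
        have : (fun n : ℕ => C ^ 2 / 16 * (1/4 : ℝ) ^ (J + 1 + n))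
            = fun n : ℕ => (C ^ 2 / 16 * (1/4 : ℝ) ^ (J + 1)) * (1/4 : ℝ) ^ n := by
          funext n; rw [pow_add]; ring
        rw [this, tsum_mul_left, tsum_geometric_of_lt_one (by norm_num) (by norm_num)]
        have h4 : (1/4 : ℝ) ^ (J+1) = ((4:ℝ) ^ (J+1))⁻¹ := by
          rw [one_div, inv_pow]
        rw [h4, pow_succ]
        have : (0:ℝ) < 4 ^ J := by positivity
        field_simp
        ring
end
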